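/- Let a,b,c,d be integers. The following three conditions are equivalent: (a) the subgroup of ℤ² generated by the vectors (a,0), (0,b), (c,d) is all of ℤ²; (b) gcd(a·b, a·d, b·c) = 1; (c) gcd(a,b) = gcd(a,c) = gcd(b,d) = 1. -/

import Mathlib

variable {X : Type*}

/-- The (nonnegative) gcd of three integers. -/
def gcd3 (a b c : ℤ) : ℕ := Nat.gcd a.natAbs (Nat.gcd b.natAbs c.natAbs)

/-- The (nonnegative) gcd of four integers. -/
def gcd4 (a b c d : ℤ) : ℕ := Nat.gcd a.natAbs (gcd3 b c d)


lemma gcd3_eq (p q r : ℤ) : gcd3 p q r = Int.gcd p (Int.gcd q r : ℤ) := by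
  simp [gcd3, Int.gcd]

lemma int_gcd_eq_one_of_dvd_one {m n : ℤ} (h : (Int.gcd m n : ℤ) ∣ 1) : Int.gcd m n = 1 :=
  Nat.dvd_one.mp (Int.natCast_dvd_natCast.mp (by exact_mod_cast h))

lemma gcd3_eq_one_iff (p q r : ℤ) :
    gcd3 p q r = 1 ↔ ∃ x y z : ℤ, x * p + y * q + z * r = 1 := by
  rw [gcd3_eq]
  constructor
  · intro h
    obtain ⟨x, w, hxw⟩ := Int.isCoprime_iff_gcd_eq_one.mpr h
    have hqr : ((Int.gcd q r : ℕ) : ℤ) = q * Int.gcdA q r + r * Int.gcdB q r :=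
      Int.gcd_eq_gcd_ab q r
    exact ⟨x, w * Int.gcdA q r, w * Int.gcdB q r, by linear_combination hxw - w * hqr⟩
  · rintro ⟨x, y, z, h⟩
    have g1 : (Int.gcd p (Int.gcd q r : ℤ) : ℤ) ∣ p := Int.gcd_dvd_left _ _
    have g2 : (Int.gcd p (Int.gcd q r : ℤ) : ℤ) ∣ q :=
      dvd_trans (Int.gcd_dvd_right _ _) (by exact_mod_cast (Int.gcd_dvd_left _ _ : (Int.gcd q r:ℤ) ∣ q))
    have g3 : (Int.gcd p (Int.gcd q r : ℤ) : ℤ) ∣ r :=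
      dvd_trans (Int.gcd_dvd_right _ _) (by exact_mod_cast (Int.gcd_dvd_right _ _ : (Int.gcd q r:ℤ) ∣ r))
    exact int_gcd_eq_one_of_dvd_one
      (h ▸ dvd_add (dvd_add (g1.mul_left x) (g2.mul_left y)) (g3.mul_left z))

lemma mem_closure3 (v1 v2 v3 w : ℤ × ℤ) :
    w ∈ AddSubgroup.closure ({v1, v2, v3} : Set (ℤ × ℤ)) ↔
      ∃ m n k : ℤ, m • v1 + n • v2 + k • v3 = w := by
  rw [← Submodule.span_int_eq_addSubgroupClosure, Submodule.mem_toAddSubgroup,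
     Submodule.mem_span_insert]
  simp only [Submodule.mem_span_pair]
  constructor
  · rintro ⟨m, z, ⟨n, k, rfl⟩, rfl⟩
    exact ⟨m, n, k, by ring⟩
  · rintro ⟨m, n, k, rfl⟩
    exact ⟨m, _, ⟨n, k, rfl⟩, by ring⟩

/-- For integers `a,b,c,d`, the following are equivalent:
(a) the subgroup of `ℤ²` generated by `(a,0), (0,b), (c,d)` is all of `ℤ²`;
(b) `gcd(ab, ad, bc) = 1`;
(c) `gcd(a,b) = gcd(a,c) = gcd(b,d) = 1`. -/
theorem z2_closure_eq_top_iff (a b c d : ℤ) :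
    (AddSubgroup.closure ({(a,0), (0,b), (c,d)} : Set (ℤ × ℤ)) = ⊤ ↔
      gcd3 (a * b) (a * d) (b * c) = 1) ∧
    (gcd3 (a * b) (a * d) (b * c) = 1 ↔
      (Int.gcd a b = 1 ∧ Int.gcd a c = 1 ∧ Int.gcd b d = 1)) := by

  have hbc : gcd3 (a * b) (a * d) (b * c) = 1 ↔
      (Int.gcd a b = 1 ∧ Int.gcd a c = 1 ∧ Int.gcd b d = 1) := by
    rw [gcd3_eq_one_iff]
    constructor
    · rintro ⟨x, y, z, h⟩
      refine ⟨?_, ?_, ?_⟩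
      · exact int_gcd_eq_one_of_dvd_one (h ▸ dvd_add (dvd_add
          (((Int.gcd_dvd_left a b).mul_right b).mul_left x)
          (((Int.gcd_dvd_left a b).mul_right d).mul_left y))
          (((Int.gcd_dvd_right a b).mul_right c).mul_left z))
      · exact int_gcd_eq_one_of_dvd_one (h ▸ dvd_add (dvd_add
          (((Int.gcd_dvd_left a c).mul_right b).mul_left x)
          (((Int.gcd_dvd_left a c).mul_right d).mul_left y))
          (((Int.gcd_dvd_right a c).mul_left b).mul_left z))
      · exact int_gcd_eq_one_of_dvd_one (h ▸ dvd_add (dvd_add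
          (((Int.gcd_dvd_left b d).mul_left a).mul_left x)
          (((Int.gcd_dvd_right b d).mul_left a).mul_left y))
          (((Int.gcd_dvd_left b d).mul_right c).mul_left z))
    · rintro ⟨hab, hac, hbd⟩
      obtain ⟨u, v, h1⟩ := Int.isCoprime_iff_gcd_eq_one.mpr hab
      obtain ⟨s, t, h2⟩ := Int.isCoprime_iff_gcd_eq_one.mpr hac
      obtain ⟨p, q, h3⟩ := Int.isCoprime_iff_gcd_eq_one.mpr hbd
      have H : (u * a + v * b) * ((s * a + t * c) * (p * b + q * d)) = 1 := by
        rw [h1, h2, h3]; norm_num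
      exact ⟨u*s*p*a + v*s*p*b, u*s*q*a + u*t*q*c + v*s*q*b,
        u*t*p*a + v*t*p*b + v*t*q*d, by linear_combination H⟩
  have hatop : AddSubgroup.closure ({(a,0), (0,b), (c,d)} : Set (ℤ × ℤ)) = ⊤ ↔
      (Int.gcd a b = 1 ∧ Int.gcd a c = 1 ∧ Int.gcd b d = 1) := by
    constructor
    · intro htop
      have h10 : ((1,0) : ℤ × ℤ) ∈ AddSubgroup.closure ({(a,0), (0,b), (c,d)} : Set (ℤ × ℤ)) := by
        rw [htop]; trivial
      have h01 : ((0,1) : ℤ × ℤ) ∈ AddSubgroup.closure ({(a,0), (0,b), (c,d)} : Set (ℤ × ℤ)) := by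
        rw [htop]; trivial
      rw [mem_closure3] at h10 h01
      obtain ⟨m, n, k, hmk⟩ := h10
      obtain ⟨m', n', k', hmk'⟩ := h01
      rw [Prod.ext_iff] at hmk hmk'
      simp only [Prod.fst_add, Prod.snd_add, Prod.smul_fst, Prod.smul_snd, smul_eq_mul,
        mul_zero, mul_one, zero_add, add_zero, mul_comm] at hmk hmk'
      obtain ⟨e1, e2⟩ := hmk
      obtain ⟨e3, e4⟩ := hmk'
      refine ⟨?_, ?_, ?_⟩
      · apply int_gcd_eq_one_of_dvd_one
        obtain ⟨a', ha'⟩ := (Int.gcd_dvd_left _ _ : (Int.gcd a b : ℤ) ∣ a)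
        obtain ⟨b', hb'⟩ := (Int.gcd_dvd_right _ _ : (Int.gcd a b : ℤ) ∣ b)
        have hck : IsCoprime ((Int.gcd a b : ℤ)) k :=
          ⟨m * a', c, by linear_combination e1 - m * ha'⟩
        have hkd : (Int.gcd a b : ℤ) ∣ k * d :=
          ⟨-(n * b'), by linear_combination e2 - n * hb'⟩
        have hd : (Int.gcd a b : ℤ) ∣ d := hck.dvd_of_dvd_mul_left hkd
        exact e4 ▸ dvd_add ((Int.gcd_dvd_right a b).mul_right n') (hd.mul_right k')
      · exact int_gcd_eq_one_of_dvd_one (e1 ▸ dvd_add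
          ((Int.gcd_dvd_left a c).mul_right m) ((Int.gcd_dvd_right a c).mul_right k))
      · exact int_gcd_eq_one_of_dvd_one (e4 ▸ dvd_add
          ((Int.gcd_dvd_left b d).mul_right n') ((Int.gcd_dvd_right b d).mul_right k'))
    · rintro ⟨hab, hac, hbd⟩
      obtain ⟨u, v, h1⟩ := Int.isCoprime_iff_gcd_eq_one.mpr hab
      obtain ⟨s, t, h2⟩ := Int.isCoprime_iff_gcd_eq_one.mpr hac
      obtain ⟨p, q, h3⟩ := Int.isCoprime_iff_gcd_eq_one.mpr hbd
      have h10 : ((1,0) : ℤ × ℤ) ∈ AddSubgroup.closure ({(a,0), (0,b), (c,d)} : Set (ℤ × ℤ)) := by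
        rw [mem_closure3]
        refine ⟨u*s*a + u*t*c + v*s*b, -(v*t*d), v*t*b, ?_⟩
        have H : (u * a + v * b) * (s * a + t * c) = 1 := by rw [h1, h2]; norm_num
        ext
        · simpa using by linear_combination H
        · simp; ring
      have h01 : ((0,1) : ℤ × ℤ) ∈ AddSubgroup.closure ({(a,0), (0,b), (c,d)} : Set (ℤ × ℤ)) := by
        rw [mem_closure3]
        refine ⟨-(u*q*c), v*p*b + v*q*d + u*p*a, u*q*a, ?_⟩
        have H : (u * a + v * b) * (p * b + q * d) = 1 := by rw [h1, h3]; norm_num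
        ext
        · simp; ring
        · simpa using by linear_combination H
      rw [AddSubgroup.eq_top_iff']
      rintro ⟨x, y⟩
      have : ((x, y) : ℤ × ℤ) = x • ((1,0) : ℤ × ℤ) + y • ((0,1) : ℤ × ℤ) := by
        ext <;> simp
      rw [this]
      exact AddSubgroup.add_mem _ (AddSubgroup.zsmul_mem _ h10 x) (AddSubgroup.zsmul_mem _ h01 y)
  exact ⟨hatop.trans hbc.symm, hbc⟩
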